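/- Let f(x) = ∑_{j=0}^{r} f_{α(j)} x^{α(j)} + f_β x^β be a circuit polynomial with all vertices α(j) even lattice points and all f_{α(j)} > 0, and suppose β is an even lattice point. If f_β ≥ −Θ_f(β), where Θ_f(β) = ∏_{j ∈ nz(β)} (f_{α(j)}/λⱼ)^{λⱼ}, then f is nonnegative on ℝⁿ. -/

import Mathlib

open Finset

lemma prod_rpow_sum_aux {ι : Type*} (s : Finset ι) {y : ℝ} (hy : 0 ≤ y)
    {c : ι → ℝ} (hc : ∀ j ∈ s, 0 ≤ c j) :
    ∏ j ∈ s, y ^ (c j) = y ^ (∑ j ∈ s, c j) := by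
  rcases hy.eq_or_lt with h | h
  · subst h
    by_cases hz : ∀ j ∈ s, c j = 0
    · rw [Finset.sum_eq_zero hz, Real.rpow_zero]
      exact Finset.prod_eq_one fun j hj => by rw [hz j hj, Real.rpow_zero]
    · push_neg at hz
      obtain ⟨j, hj, hjz⟩ := hz
      have hsumpos : 0 < ∑ j ∈ s, c j :=
        Finset.sum_pos' hc ⟨j, hj, (hc j hj).lt_of_ne (Ne.symm hjz)⟩
      rw [Finset.prod_eq_zero hj (Real.zero_rpow hjz), Real.zero_rpow hsumpos.ne']
  · exact (Real.rpow_sum_of_pos h c s).symm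

theorem stmt_6 (n r : ℕ) (α : Fin (r + 1) → Fin n → ℕ) (β : Fin n → ℕ)
    (lam : Fin (r + 1) → ℝ) (coef : Fin (r + 1) → ℝ) (fβ : ℝ)
    (hα : ∀ j i, Even (α j i)) (hβeven : ∀ i, Even (β i))
    (hlam : ∀ j, 0 ≤ lam j) (hsum : ∑ j, lam j = 1)
    (hβ : ∀ i, (β i : ℝ) = ∑ j, lam j * (α j i : ℝ))
    (hcoef : ∀ j, 0 < coef j)
    (hfβ : -(∏ j ∈ Finset.univ.filter (fun j => lam j ≠ 0),
        (coef j / lam j) ^ (lam j)) ≤ fβ) :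
    ∀ x : Fin n → ℝ,
      0 ≤ (∑ j, coef j * ∏ i, x i ^ (α j i)) + fβ * ∏ i, x i ^ (β i) := by
  intro x
  set y : Fin n → ℝ := fun i => |x i| with hy
  have hy0 : ∀ i, 0 ≤ y i := fun i => abs_nonneg _
  -- replace x by y everywhere
  have hxα : ∀ j, (∏ i, x i ^ (α j i)) = ∏ i, y i ^ (α j i) := fun j =>
    Finset.prod_congr rfl fun i _ => ((hα j i).pow_abs (x i)).symm
  have hxβ : (∏ i, x i ^ (β i)) = ∏ i, y i ^ (β i) :=
    Finset.prod_congr rfl fun i _ => ((hβeven i).pow_abs (x i)).symm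
  set s : Finset (Fin (r + 1)) := Finset.univ.filter (fun j => lam j ≠ 0) with hs
  set P : Fin (r + 1) → ℝ := fun j => ∏ i, y i ^ (α j i) with hP
  have hP0 : ∀ j, 0 ≤ P j := fun j => Finset.prod_nonneg fun i _ => pow_nonneg (hy0 i) _
  set z : Fin (r + 1) → ℝ := fun j => coef j / lam j * P j with hz
  have hz0 : ∀ j, 0 ≤ z j := fun j =>
    mul_nonneg (div_nonneg (hcoef j).le (hlam j)) (hP0 j)
  have hsum' : ∑ j ∈ s, lam j = 1 := by
    rw [← hsum]
    exact Finset.sum_filter_ne_zero Finset.univ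
  -- AM-GM
  have amgm : ∏ j ∈ s, z j ^ (lam j) ≤ ∑ j ∈ s, lam j * z j :=
    Real.geom_mean_le_arith_mean_weighted s lam z (fun j _ => hlam j) hsum'
      (fun j _ => hz0 j)
  -- RHS of AM-GM
  have hrhs : ∑ j ∈ s, lam j * z j ≤ ∑ j, coef j * P j := by
    have : ∀ j ∈ s, lam j * z j = coef j * P j := by
      intro j hj
      have hlj : lam j ≠ 0 := (Finset.mem_filter.mp hj).2
      simp only [hz]
      field_simp
    rw [Finset.sum_congr rfl this]
    exact Finset.sum_le_sum_of_subset_of_nonneg (Finset.subset_univ s)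
      (fun j _ _ => mul_nonneg (hcoef j).le (hP0 j))
  -- LHS of AM-GM: split
  have hlhs : (∏ j ∈ s, (coef j / lam j) ^ (lam j)) * ∏ i, y i ^ (β i)
      = ∏ j ∈ s, z j ^ (lam j) := by
    have hsplit : ∀ j ∈ s, z j ^ (lam j)
        = (coef j / lam j) ^ (lam j) * (P j) ^ (lam j) := fun j _ =>
      Real.mul_rpow (div_nonneg (hcoef j).le (hlam j)) (hP0 j)
    rw [Finset.prod_congr rfl hsplit, Finset.prod_mul_distrib]
    congr 1
    -- ∏ i, y i ^ β i = ∏ j ∈ s, (P j) ^ lam j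
    have hPj : ∀ j ∈ s, (P j) ^ (lam j) = ∏ i, y i ^ ((α j i : ℝ) * lam j) := by
      intro j _
      show (∏ i, y i ^ (α j i)) ^ (lam j) = _
      rw [← Real.finset_prod_rpow _ _ (fun i _ => pow_nonneg (hy0 i) _)]
      exact Finset.prod_congr rfl fun i _ => by
        rw [← Real.rpow_natCast (y i) (α j i), ← Real.rpow_mul (hy0 i)]
    rw [Finset.prod_congr rfl hPj, Finset.prod_comm]
    refine Finset.prod_congr rfl fun i _ => ?_
    rw [prod_rpow_sum_aux s (hy0 i)
      (fun j _ => mul_nonneg (Nat.cast_nonneg _) (hlam j))]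
    have : ∑ j ∈ s, (α j i : ℝ) * lam j = (β i : ℝ) := by
      rw [hβ i]
      rw [Finset.sum_subset (Finset.subset_univ s) (fun j _ hj => by
        simp only [hs, Finset.mem_filter, Finset.mem_univ, true_and, not_not] at hj
        simp [hj])]
      exact Finset.sum_congr rfl fun j _ => mul_comm _ _
    rw [this, Real.rpow_natCast]
  -- combine
  have key : (∏ j ∈ s, (coef j / lam j) ^ (lam j)) * ∏ i, y i ^ (β i)
      ≤ ∑ j, coef j * P j := hlhs ▸ le_trans amgm hrhs
  have hB : 0 ≤ ∏ i, y i ^ (β i) := Finset.prod_nonneg fun i _ => pow_nonneg (hy0 i) _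
  have hfβB : -((∏ j ∈ s, (coef j / lam j) ^ (lam j)) * ∏ i, y i ^ (β i))
      ≤ fβ * ∏ i, y i ^ (β i) := by
    rw [neg_mul_eq_neg_mul]
    exact mul_le_mul_of_nonneg_right hfβ hB
  calc (0 : ℝ) ≤ (∑ j, coef j * P j)
        - (∏ j ∈ s, (coef j / lam j) ^ (lam j)) * ∏ i, y i ^ (β i) := by linarith
    _ ≤ (∑ j, coef j * P j) + fβ * ∏ i, y i ^ (β i) := by linarith
    _ = (∑ j, coef j * ∏ i, x i ^ (α j i)) + fβ * ∏ i, x i ^ (β i) := by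
        rw [hxβ]
        exact congrArg (· + _) (Finset.sum_congr rfl fun j _ => by rw [hxα j]).symm
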